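/- Let X be a completely regular Hausdorff (Tychonoff) topological space and let F be a linear subspace of C(X) containing the constant function 1. Let φ : ℝ → ℝ be continuous and not affine (there are no a, b ∈ ℝ with φ(t) = a·t + b for all t ∈ ℝ), and assume φ ∘ f ∈ F for every f ∈ F. Then the closure of F in the compact-open topology is closed under pointwise multiplication and under the pointwise lattice operation ⊔ (it is a subalgebra and a sublattice of C(X)); moreover, if F separates the points of X, then F is dense in C(X). -/

import Mathlib

open Set MeasureTheory intervalIntegral ContinuousMap

noncomputable section Stmt16Aux

/-- Closure membership in the compact-open topology, via uniform approximation on compacts. -/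
theorem stmt16_memclo {α : Type*} [TopologicalSpace α] {M : Set C(α, ℝ)} {f : C(α, ℝ)} :
    f ∈ closure M ↔ ∀ K : Set α, IsCompact K → ∀ ε : ℝ, 0 < ε →
      ∃ g ∈ M, ∀ x ∈ K, dist (g x) (f x) < ε := by
  have hb := (Metric.uniformity_basis_dist (α := ℝ)).compactConvergenceUniformity (α := α)
  rw [mem_closure_iff_nhds_basis (nhds_basis_uniformity' hb)]
  constructor
  · intro H K hK ε hε
    obtain ⟨g, hgM, hg⟩ := H (K, ε) ⟨hK, hε⟩
    exact ⟨g, hgM, fun x hx => by simpa [dist_comm] using hg x hx⟩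
  · rintro H ⟨K, ε⟩ ⟨hK, hε⟩
    obtain ⟨g, hgM, hg⟩ := H K hK ε hε
    exact ⟨g, hgM, fun x hx => by simpa [dist_comm] using hg x hx⟩

/-- The affine function `t ↦ a*t+b` as a continuous map. -/
def affCM (a b : ℝ) : C(ℝ, ℝ) := ⟨fun t => a * t + b, by continuity⟩

@[simp] lemma affCM_apply (a b t : ℝ) : affCM a b t = a * t + b := rfl

variable (φ : ℝ → ℝ)

/-- Generating set: affine functions together with `φ` composed with affine functions. -/
def Aφ : Set C(ℝ, ℝ) :=
  {g | (∃ a b : ℝ, ∀ t, g t = a * t + b) ∨ ∃ a b : ℝ, ∀ t, g t = φ (a * t + b)}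

/-- The closed linear span of `Aφ`. -/
def Sφ : Submodule ℝ C(ℝ, ℝ) := (Submodule.span ℝ (Aφ φ)).topologicalClosure

lemma mem_Sφ_of_mem_A {g : C(ℝ, ℝ)} (hg : g ∈ Aφ φ) : g ∈ Sφ φ :=
  Submodule.le_topologicalClosure _ (Submodule.subset_span hg)

lemma one_mem_Sφ : (1 : C(ℝ, ℝ)) ∈ Sφ φ :=
  mem_Sφ_of_mem_A φ (Or.inl ⟨0, 1, fun t => by simp⟩)

lemma Sφ_isClosed : IsClosed (Sφ φ : Set C(ℝ, ℝ)) :=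
  Submodule.isClosed_topologicalClosure _

lemma comp_aff_mem {ψ : C(ℝ, ℝ)} (hψ : ψ ∈ Sφ φ) (c d : ℝ) :
    ψ.comp (affCM c d) ∈ Sφ φ := by
  let L : C(ℝ, ℝ) →ₗ[ℝ] C(ℝ, ℝ) :=
    { toFun := fun g => g.comp (affCM c d)
      map_add' := fun g h => by ext t; simp
      map_smul' := fun r g => by ext t; simp }
  have hLc : Continuous L := ContinuousMap.continuous_precomp (affCM c d)
  have hA : ∀ g ∈ Aφ φ, g.comp (affCM c d) ∈ Aφ φ := by
    rintro g (⟨a, b, hab⟩ | ⟨a, b, hab⟩)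
    · exact Or.inl ⟨a * c, a * d + b, fun t => by simp [hab]; ring⟩
    · exact Or.inr ⟨a * c, a * d + b, fun t => by rw [ContinuousMap.comp_apply, hab]; simp; ring_nf⟩
  have hspan : L '' ((Submodule.span ℝ (Aφ φ)) : Set C(ℝ, ℝ))
      ⊆ ((Submodule.span ℝ (Aφ φ)) : Set C(ℝ, ℝ)) := by
    rw [← Submodule.map_coe]
    refine SetLike.coe_subset_coe.mpr ?_
    rw [Submodule.map_span]
    exact Submodule.span_le.mpr fun x hx => by
      obtain ⟨g, hg, rfl⟩ := hx
      exact Submodule.subset_span (hA g hg)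
  have h1 : L ψ ∈ closure (L '' ((Submodule.span ℝ (Aφ φ)) : Set C(ℝ, ℝ))) :=
    image_closure_subset_closure_image hLc ⟨ψ, hψ, rfl⟩
  exact closure_mono hspan h1

lemma cm_intervalIntegrable (ψ : C(ℝ, ℝ)) (a b : ℝ) : IntervalIntegrable ψ volume a b :=
  ψ.continuous.intervalIntegrable a b

lemma hasDerivAt_prim (ψ : C(ℝ, ℝ)) (u : ℝ) :
    HasDerivAt (fun v => ∫ s in (0:ℝ)..v, ψ s) (ψ u) u :=
  intervalIntegral.integral_hasDerivAt_right (cm_intervalIntegrable ψ 0 u)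
    (ψ.continuous.stronglyMeasurableAtFilter volume (nhds u)) ψ.continuous.continuousAt

lemma hasDerivAt_TIfun (ψ : C(ℝ, ℝ)) (ε t : ℝ) :
    HasDerivAt (fun t => (∫ s in (0:ℝ)..(t + ε), ψ s) - ∫ s in (0:ℝ)..t, ψ s)
      (ψ (t + ε) - ψ t) t := by
  have h1 : HasDerivAt (fun v => ∫ s in (0:ℝ)..(v + ε), ψ s) (ψ (t + ε)) t := by
    have := (hasDerivAt_prim ψ (t + ε)).comp t ((hasDerivAt_id t).add_const ε)
    simpa [Function.comp_def] using this
  exact h1.sub (hasDerivAt_prim ψ t)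

/-- Smoothing operator: `(TI ψ ε) t = ∫ s in t..t+ε, ψ s`. -/
def TI (ψ : C(ℝ, ℝ)) (ε : ℝ) : C(ℝ, ℝ) :=
  ⟨fun t => (∫ s in (0:ℝ)..(t + ε), ψ s) - ∫ s in (0:ℝ)..t, ψ s, by
    have : Differentiable ℝ (fun t => (∫ s in (0:ℝ)..(t + ε), ψ s) - ∫ s in (0:ℝ)..t, ψ s) :=
      fun t => (hasDerivAt_TIfun ψ ε t).differentiableAt
    exact this.continuous⟩

lemma TI_apply (ψ : C(ℝ, ℝ)) (ε t : ℝ) : TI ψ ε t = ∫ s in t..(t + ε), ψ s :=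
  integral_interval_sub_left (cm_intervalIntegrable ψ 0 (t + ε)) (cm_intervalIntegrable ψ 0 t)

lemma hasDerivAt_TI (ψ : C(ℝ, ℝ)) (ε t : ℝ) :
    HasDerivAt (fun u => TI ψ ε u) (ψ (t + ε) - ψ t) t :=
  hasDerivAt_TIfun ψ ε t

lemma TI_mem {ψ : C(ℝ, ℝ)} (hψ : ψ ∈ Sφ φ) {ε : ℝ} (hε : 0 < ε) : TI ψ ε ∈ Sφ φ := by
  have hclosed : IsClosed (Sφ φ : Set C(ℝ, ℝ)) := Sφ_isClosed φ
  suffices h : TI ψ ε ∈ closure (Sφ φ : Set C(ℝ, ℝ)) by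
    rwa [hclosed.closure_eq] at h
  rw [stmt16_memclo]
  intro K hK δ hδ
  obtain ⟨r, hr⟩ := hK.isBounded.subset_closedBall 0
  have hUC := (isCompact_Icc (a := -r) (b := r + ε)).uniformContinuousOn_of_continuous
    ψ.continuous.continuousOn
  rw [Metric.uniformContinuousOn_iff] at hUC
  obtain ⟨η, hη, hηs⟩ := hUC (δ / (2 * ε)) (by positivity)
  obtain ⟨n, hn⟩ := exists_nat_gt (ε / η)
  set m : ℕ := n + 1 with hm
  have hm0 : (0:ℝ) < (m : ℝ) := by positivity
  set c : ℝ := ε / m with hc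
  have hc0 : 0 < c := by positivity
  have hcη : c < η := by
    have h1 : ε / η < (m : ℝ) := lt_of_lt_of_le hn (by exact_mod_cast Nat.le_succ n)
    have h2 : ε < (m : ℝ) * η := by
      have := (div_lt_iff₀ hη).mp h1
      linarith
    rw [hc, div_lt_iff₀ hm0]
    linarith
  have hmc : (m : ℝ) * c = ε := by
    rw [hc]; field_simp
  refine ⟨c • ∑ k ∈ Finset.range m, ψ.comp (affCM 1 ((k : ℝ) * c)), ?_, ?_⟩
  · exact SetLike.mem_coe.mpr (Submodule.smul_mem _ _
      (Submodule.sum_mem _ fun k _ => comp_aff_mem φ hψ 1 ((k : ℝ) * c)))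
  · intro t ht
    have htr : |t| ≤ r := by
      have := hr ht
      rwa [Metric.mem_closedBall, Real.dist_eq, sub_zero] at this
    -- the adjacent-interval decomposition
    have hint : TI ψ ε t
        = ∑ k ∈ Finset.range m, ∫ s in (t + (k : ℝ) * c)..(t + ((k : ℝ) + 1) * c), ψ s := by
      rw [TI_apply]
      have := intervalIntegral.sum_integral_adjacent_intervals
        (a := fun k : ℕ => t + (k : ℝ) * c) (n := m) (μ := volume) (f := ψ)
        (fun k _ => cm_intervalIntegrable ψ _ _)
      rw [show t = t + ((0:ℕ) : ℝ) * c by simp, show t + ((0:ℕ) : ℝ) * c + ε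
        = t + ((m : ℝ)) * c by simp [hmc], ← this]
      refine Finset.sum_congr rfl fun k _ => ?_
      push_cast
      ring_nf
    have hgt : (c • ∑ k ∈ Finset.range m, ψ.comp (affCM 1 ((k : ℝ) * c))) t
        = ∑ k ∈ Finset.range m, c * ψ (t + (k : ℝ) * c) := by
      rw [ContinuousMap.smul_apply, ContinuousMap.sum_apply, smul_eq_mul, Finset.mul_sum]
      refine Finset.sum_congr rfl fun k _ => ?_
      simp [affCM]
    rw [Real.dist_eq, hgt, hint, ← Finset.sum_sub_distrib]
    have hterm : ∀ k ∈ Finset.range m,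
        |c * ψ (t + (k : ℝ) * c) - ∫ s in (t + (k : ℝ) * c)..(t + ((k : ℝ) + 1) * c), ψ s|
          ≤ δ / (2 * ε) * c := by
      intro k hk
      have hkm : (k : ℝ) + 1 ≤ (m : ℝ) := by
        have := Finset.mem_range.mp hk
        exact_mod_cast Nat.succ_le_of_lt this
      have hk0 : (0 : ℝ) ≤ (k : ℝ) := Nat.cast_nonneg k
      set a : ℝ := t + (k : ℝ) * c with ha
      have haK : a ∈ Icc (-r) (r + ε) := by
        constructor
        · have : -r ≤ t := by rw [abs_le] at htr; exact htr.1
          nlinarith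
        · have : t ≤ r := by rw [abs_le] at htr; exact htr.2
          nlinarith
      have hconst : c * ψ a = ∫ _ in a..(a + c), ψ a := by
        rw [intervalIntegral.integral_const]
        simp [smul_eq_mul]
      have hend : t + ((k : ℝ) + 1) * c = a + c := by rw [ha]; ring
      rw [hend, hconst, ← intervalIntegral.integral_sub (by
          simpa using intervalIntegrable_const (μ := volume) (c := ψ a) (a := a) (b := a + c))
        (cm_intervalIntegrable ψ a (a + c))]
      have hbound : ∀ s ∈ Set.uIoc a (a + c), ‖ψ a - ψ s‖ ≤ δ / (2 * ε) := by
        intro s hs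
        rw [Set.uIoc_of_le (by linarith)] at hs
        have hsK : s ∈ Icc (-r) (r + ε) := by
          constructor
          · have := haK.1; have := hs.1; linarith
          · have := haK.2
            have h2 : a + c ≤ r + ε := by
              have : t ≤ r := by rw [abs_le] at htr; exact htr.2
              nlinarith
            have := hs.2; linarith
        have hdist : dist s a < η := by
          rw [Real.dist_eq, abs_lt]
          constructor
          · have := hs.1; linarith
          · have := hs.2; linarith
        have := hηs s hsK a haK hdist
        rw [Real.dist_eq] at this
        have : |ψ a - ψ s| ≤ δ / (2 * ε) := by
          rw [abs_sub_comm]; exact le_of_lt this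
        simpa [Real.norm_eq_abs] using this
      have := intervalIntegral.norm_integral_le_of_norm_le_const hbound
      rw [Real.norm_eq_abs] at this
      have habs : |a + c - a| = c := by rw [abs_of_pos (by linarith)]; ring_nf
      calc |∫ s in a..(a + c), (ψ a - ψ s)| ≤ δ / (2 * ε) * |a + c - a| := this
        _ = δ / (2 * ε) * c := by rw [habs]
    calc |∑ k ∈ Finset.range m,
          (c * ψ (t + (k : ℝ) * c) - ∫ s in (t + (k : ℝ) * c)..(t + ((k : ℝ) + 1) * c), ψ s)|
        ≤ ∑ k ∈ Finset.range m, |c * ψ (t + (k : ℝ) * c)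
            - ∫ s in (t + (k : ℝ) * c)..(t + ((k : ℝ) + 1) * c), ψ s| :=
          Finset.abs_sum_le_sum_abs _ _
      _ ≤ ∑ _k ∈ Finset.range m, δ / (2 * ε) * c := Finset.sum_le_sum hterm
      _ = (m : ℝ) * (δ / (2 * ε) * c) := by rw [Finset.sum_const, Finset.card_range]; simp [nsmul_eq_mul]
      _ = δ / (2 * ε) * ((m : ℝ) * c) := by ring
      _ = δ / 2 := by rw [hmc]; field_simp
      _ < δ := by linarith


lemma uIoc_abs_le {u s : ℝ} (hs : s ∈ Set.uIoc 0 u) : |s| ≤ |u| := by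
  rcases Set.mem_uIoc.mp hs with ⟨h1, h2⟩ | ⟨h1, h2⟩
  · rw [abs_of_pos h1]; exact h2.trans (le_abs_self u)
  · rw [abs_of_nonpos h2]
    have := neg_abs_le u
    linarith

lemma uIoc_center_abs_le {c s r : ℝ} (hr : r ∈ Set.uIoc (c - s) (c + s)) : |r - c| ≤ |s| := by
  have h1 := le_abs_self s
  have h2 := neg_abs_le s
  rcases Set.mem_uIoc.mp hr with ⟨ha, hb⟩ | ⟨ha, hb⟩ <;>
    · rw [abs_le]; constructor <;> linarith

/-- Second-order Taylor-type estimate for the symmetric second difference. -/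
lemma stmt16_taylor2 {ψ ψ₁ ψ₂ : ℝ → ℝ} (h1 : ∀ t, HasDerivAt ψ (ψ₁ t) t)
    (h2 : ∀ t, HasDerivAt ψ₁ (ψ₂ t) t) (hc : Continuous ψ₂) (c : ℝ) {δ : ℝ} (hδ : 0 < δ) :
    ∃ η > 0, ∀ u : ℝ, |u| ≤ η →
      |ψ (c + u) + ψ (c - u) - 2 * ψ c - u ^ 2 * ψ₂ c| ≤ δ * u ^ 2 := by
  have hψ₁c : Continuous ψ₁ := by
    have : Differentiable ℝ ψ₁ := fun t => (h2 t).differentiableAt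
    exact this.continuous
  obtain ⟨η, hη, hball⟩ : ∃ η > 0, ∀ r : ℝ, |r - c| ≤ η → |ψ₂ r - ψ₂ c| ≤ δ / 2 := by
    obtain ⟨d0, hd0, hd⟩ := Metric.continuousAt_iff.mp hc.continuousAt (δ / 2) (by positivity)
    refine ⟨d0 / 2, by positivity, fun r hr => ?_⟩
    have := hd (show dist r c < d0 by rw [Real.dist_eq]; linarith)
    rw [Real.dist_eq] at this
    linarith
  have hDc : Continuous fun s => ψ₁ (c + s) - ψ₁ (c - s) - 2 * s * ψ₂ c := by
    apply Continuous.sub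
    apply Continuous.sub
    · exact hψ₁c.comp (continuous_const.add continuous_id)
    · exact hψ₁c.comp (continuous_const.sub continuous_id)
    · exact (continuous_const.mul continuous_id).mul continuous_const
  have hDbound : ∀ s : ℝ, |s| ≤ η → |ψ₁ (c + s) - ψ₁ (c - s) - 2 * s * ψ₂ c| ≤ δ * |s| := by
    intro s hs
    have key : (∫ r in (c - s)..(c + s), (ψ₂ r - ψ₂ c))
        = ψ₁ (c + s) - ψ₁ (c - s) - 2 * s * ψ₂ c := by
      rw [intervalIntegral.integral_sub (hc.intervalIntegrable _ _) intervalIntegrable_const]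
      rw [intervalIntegral.integral_eq_sub_of_hasDerivAt (fun x _ => h2 x)
        (hc.intervalIntegrable _ _)]
      rw [intervalIntegral.integral_const]
      simp only [smul_eq_mul]
      ring
    rw [← key]
    have := intervalIntegral.norm_integral_le_of_norm_le_const
      (C := δ / 2) (f := fun r => ψ₂ r - ψ₂ c) (a := c - s) (b := c + s) (fun r hr => by
        rw [Real.norm_eq_abs]
        exact hball r ((uIoc_center_abs_le hr).trans hs))
    rw [Real.norm_eq_abs] at this
    have he : |c + s - (c - s)| = 2 * |s| := by
      rw [show c + s - (c - s) = 2 * s by ring, abs_mul]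
      norm_num
    calc |∫ r in (c - s)..(c + s), (ψ₂ r - ψ₂ c)| ≤ δ / 2 * |c + s - (c - s)| := this
      _ = δ * |s| := by rw [he]; ring
  refine ⟨η, hη, fun u hu => ?_⟩
  have key2 : (∫ s in (0:ℝ)..u, (ψ₁ (c + s) - ψ₁ (c - s) - 2 * s * ψ₂ c))
      = ψ (c + u) + ψ (c - u) - 2 * ψ c - u ^ 2 * ψ₂ c := by
    rw [intervalIntegral.integral_eq_sub_of_hasDerivAt
      (f := fun v => ψ (c + v) + ψ (c - v) - v ^ 2 * ψ₂ c) (fun x _ => ?_)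
      (hDc.intervalIntegrable _ _)]
    · ring
    · have d1 : HasDerivAt (fun v => ψ (c + v)) (ψ₁ (c + x)) x :=
        HasDerivAt.comp_const_add c x (h1 (c + x))
      have d2 : HasDerivAt (fun v => ψ (c - v)) (-ψ₁ (c - x)) x :=
        HasDerivAt.comp_const_sub c x (h1 (c - x))
      have d3 : HasDerivAt (fun v : ℝ => v ^ 2 * ψ₂ c) (2 * x * ψ₂ c) x := by
        have h := (hasDerivAt_pow 2 x).mul_const (ψ₂ c)
        have e : ((2:ℕ) : ℝ) * x ^ (2 - 1) * ψ₂ c = 2 * x * ψ₂ c := by norm_num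
        rwa [e] at h
      have h4 := (d1.add d2).sub d3
      have e2 : ψ₁ (c + x) + -ψ₁ (c - x) - 2 * x * ψ₂ c
          = ψ₁ (c + x) - ψ₁ (c - x) - 2 * x * ψ₂ c := by ring
      rwa [e2] at h4
  rw [← key2]
  have := intervalIntegral.norm_integral_le_of_norm_le_const (C := δ * |u|)
    (f := fun s => ψ₁ (c + s) - ψ₁ (c - s) - 2 * s * ψ₂ c) (a := 0) (b := u) (fun s hs => by
      rw [Real.norm_eq_abs]
      have hsu : |s| ≤ |u| := uIoc_abs_le hs
      exact (hDbound s (hsu.trans hu)).trans (by nlinarith [abs_nonneg s]))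
  rw [Real.norm_eq_abs, sub_zero] at this
  calc |∫ s in (0:ℝ)..u, (ψ₁ (c + s) - ψ₁ (c - s) - 2 * s * ψ₂ c)| ≤ δ * |u| * |u| := this
    _ = δ * u ^ 2 := by rw [mul_assoc, abs_mul_abs_self, sq]

/-- A continuous midpoint-affine function is affine. -/
lemma stmt16_affine_of_midpoint (hφ : Continuous φ)
    (H : ∀ x y : ℝ, φ x + φ y = 2 * φ ((x + y) / 2)) :
    ∃ a b : ℝ, ∀ t, φ t = a * t + b := by
  set g : ℝ → ℝ := fun t => φ t - ((φ 1 - φ 0) * t + φ 0) with hg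
  have hgc : Continuous g := hφ.sub ((continuous_const.mul continuous_id).add continuous_const)
  have hg0 : g 0 = 0 := by simp [hg]
  have hg1 : g 1 = 0 := by simp [hg]
  have hgmid : ∀ x y, g x + g y = 2 * g ((x + y) / 2) := by
    intro x y
    have h := H x y
    simp only [hg]
    ring_nf
    ring_nf at h
    linarith
  have hgadd : ∀ x y, g (x + y) = g x + g y := by
    intro x y
    have h1 := hgmid (x + y) 0
    have h2 := hgmid x y
    rw [hg0, add_zero] at h1
    rw [show x + y + 0 = x + y by ring] at h1
    exact h1.trans h2.symm
  have hlin : ∀ t, g t = g 1 * t := by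
    let G : ℝ →+ ℝ := AddMonoidHom.mk' g hgadd
    let L := G.toRealLinearMap hgc
    intro t
    have h1 : L t = t • L 1 := by rw [← _root_.map_smul]; norm_num
    have h2 : ∀ s, L s = g s := fun s => congrFun (G.coe_toRealLinearMap hgc) s
    rw [h2, h2] at h1
    rw [h1, smul_eq_mul, mul_comm]
  refine ⟨φ 1 - φ 0, φ 0, fun t => ?_⟩
  have := hlin t
  rw [hg1, zero_mul] at this
  simp only [hg] at this
  linarith


/-- The squaring function. -/
def sqCM : C(ℝ, ℝ) := ⟨fun t => t * t, by continuity⟩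

@[simp] lemma sqCM_apply (t : ℝ) : sqCM t = t * t := rfl

lemma sq_mem_Sφ (hφ : Continuous φ) (hna : ¬∃ a b : ℝ, ∀ t, φ t = a * t + b) :
    sqCM ∈ Sφ φ := by
  -- a nonzero symmetric second difference exists
  have hsd : ∃ c ε : ℝ, 0 < ε ∧ (φ (c + ε + ε) - φ (c + ε)) - (φ (c + ε) - φ c) ≠ 0 := by
    by_contra h
    push_neg at h
    apply hna
    apply stmt16_affine_of_midpoint φ hφ
    intro x y
    rcases lt_trichotomy x y with hxy | rfl | hxy
    · have h0 := h x ((y - x) / 2) (by linarith)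
      rw [show x + (y - x) / 2 = (x + y) / 2 by ring] at h0
      rw [show (x + y) / 2 + (y - x) / 2 = y by ring] at h0
      linarith
    · rw [show (x + x) / 2 = x by ring]; ring
    · have h0 := h y ((x - y) / 2) (by linarith)
      rw [show y + (x - y) / 2 = (x + y) / 2 by ring] at h0
      rw [show (x + y) / 2 + (x - y) / 2 = x by ring] at h0
      linarith
  obtain ⟨c, ε, hε, hd⟩ := hsd
  set φc : C(ℝ, ℝ) := ⟨φ, hφ⟩ with hφcdef
  have hφmem : φc ∈ Sφ φ := mem_Sφ_of_mem_A φ (Or.inr ⟨1, 0, fun t => by show φ t = φ (1 * t + 0); norm_num⟩)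
  set ψ : C(ℝ, ℝ) := TI (TI φc ε) ε with hψdef
  have hψmem : ψ ∈ Sφ φ := TI_mem φ (TI_mem φ hφmem hε) hε
  set ψ₁ : ℝ → ℝ := fun t => TI φc ε (t + ε) - TI φc ε t with hψ₁def
  set ψ₂ : ℝ → ℝ := fun t => (φ (t + ε + ε) - φ (t + ε)) - (φ (t + ε) - φ t) with hψ₂def
  have h1 : ∀ t, HasDerivAt (fun u => ψ u) (ψ₁ t) t := fun t => hasDerivAt_TI (TI φc ε) ε t
  have h2 : ∀ t, HasDerivAt ψ₁ (ψ₂ t) t := by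
    intro t
    have da : HasDerivAt (fun u => TI φc ε (u + ε)) (φ (t + ε + ε) - φ (t + ε)) t := by
      have := (hasDerivAt_TI φc ε (t + ε)).comp t ((hasDerivAt_id t).add_const ε)
      simp [Function.comp_def] at this; exact this
    exact da.sub (hasDerivAt_TI φc ε t)
  have hψ₂c : Continuous ψ₂ := by
    have e1 : Continuous fun t : ℝ => φ (t + ε + ε) :=
      hφ.comp ((continuous_id.add continuous_const).add continuous_const)
    have e2 : Continuous fun t : ℝ => φ (t + ε) :=
      hφ.comp (continuous_id.add continuous_const)
    exact (e1.sub e2).sub (e2.sub hφ)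
  have hd' : ψ₂ c ≠ 0 := hd
  have hclosed : IsClosed (Sφ φ : Set C(ℝ, ℝ)) := Sφ_isClosed φ
  suffices h : sqCM ∈ closure (Sφ φ : Set C(ℝ, ℝ)) by rwa [hclosed.closure_eq] at h
  rw [stmt16_memclo]
  intro K hK δ hδ
  obtain ⟨r, hr⟩ := hK.isBounded.subset_closedBall 0
  set R : ℝ := |r| + 1 with hR
  have hR0 : 0 < R := by positivity
  have habs : 0 < |ψ₂ c| := abs_pos.mpr hd'
  set δ₂ : ℝ := δ * |ψ₂ c| / (2 * R ^ 2) with hδ₂def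
  have hδ₂ : 0 < δ₂ := by positivity
  obtain ⟨η, hη, hT⟩ := stmt16_taylor2 h1 h2 hψ₂c c hδ₂
  set w : ℝ := η / R with hwdef
  have hw0 : 0 < w := by positivity
  refine ⟨(1 / (w ^ 2 * ψ₂ c)) • (ψ.comp (affCM w c) + ψ.comp (affCM (-w) c)
    - (2 * ψ c) • (1 : C(ℝ, ℝ))), ?_, ?_⟩
  · exact SetLike.mem_coe.mpr (Submodule.smul_mem _ _ (Submodule.sub_mem _
      (Submodule.add_mem _ (comp_aff_mem φ hψmem w c) (comp_aff_mem φ hψmem (-w) c))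
      (Submodule.smul_mem _ _ (one_mem_Sφ φ))))
  · intro t ht
    have htR : |t| ≤ R := by
      have h3 := hr ht
      rw [Metric.mem_closedBall, Real.dist_eq, sub_zero] at h3
      calc |t| ≤ r := h3
        _ ≤ |r| := le_abs_self r
        _ ≤ R := by rw [hR]; linarith
    have hu : |w * t| ≤ η := by
      rw [abs_mul, abs_of_pos hw0]
      calc w * |t| ≤ w * R := mul_le_mul_of_nonneg_left htR (le_of_lt hw0)
        _ = η := by rw [hwdef]; field_simp
    have hE := hT (w * t) hu
    have hnz : w ^ 2 * ψ₂ c ≠ 0 := mul_ne_zero (pow_ne_zero _ (ne_of_gt hw0)) hd'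
    have hgt : ((1 / (w ^ 2 * ψ₂ c)) • (ψ.comp (affCM w c) + ψ.comp (affCM (-w) c)
        - (2 * ψ c) • (1 : C(ℝ, ℝ)))) t
        = (ψ (c + w * t) + ψ (c - w * t) - 2 * ψ c) / (w ^ 2 * ψ₂ c) := by
      simp only [ContinuousMap.smul_apply, ContinuousMap.sub_apply, ContinuousMap.add_apply,
        ContinuousMap.comp_apply, affCM_apply, ContinuousMap.one_apply, smul_eq_mul]
      rw [show w * t + c = c + w * t by ring, show -w * t + c = c - w * t by ring]
      ring
    rw [Real.dist_eq, hgt, sqCM_apply]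
    have hkey : (ψ (c + w * t) + ψ (c - w * t) - 2 * ψ c) / (w ^ 2 * ψ₂ c) - t * t
        = (ψ (c + w * t) + ψ (c - w * t) - 2 * ψ c - (w * t) ^ 2 * ψ₂ c) / (w ^ 2 * ψ₂ c) := by
      field_simp
    rw [hkey, abs_div]
    have hden : |w ^ 2 * ψ₂ c| = w ^ 2 * |ψ₂ c| := by
      rw [abs_mul, abs_of_pos (by positivity : (0:ℝ) < w ^ 2)]
    rw [hden]
    rw [div_lt_iff₀ (by positivity)]
    have ht2 : t ^ 2 ≤ R ^ 2 := by nlinarith [abs_nonneg t, sq_abs t, sq_abs R]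
    calc |ψ (c + w * t) + ψ (c - w * t) - 2 * ψ c - (w * t) ^ 2 * ψ₂ c|
        ≤ δ₂ * (w * t) ^ 2 := hE
      _ = δ₂ * w ^ 2 * t ^ 2 := by ring
      _ ≤ δ₂ * w ^ 2 * R ^ 2 := mul_le_mul_of_nonneg_left ht2 (by positivity)
      _ = δ / 2 * (w ^ 2 * |ψ₂ c|) := by rw [hδ₂def]; field_simp
      _ < δ * (w ^ 2 * |ψ₂ c|) := by
          have hM : 0 < w ^ 2 * |ψ₂ c| := by positivity
          have : δ / 2 < δ := by linarith
          exact mul_lt_mul_of_pos_right this hM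
/-- Scalar multiplication by a constant is continuous on `C(α, ℝ)` for any `α`. -/
instance stmt16_continuousConstSMul {α : Type*} [TopologicalSpace α] :
    ContinuousConstSMul ℝ C(α, ℝ) := by
  constructor
  intro c
  have he : (fun f : C(α, ℝ) => c • f)
      = fun f : C(α, ℝ) => (⟨fun x : ℝ => c * x, by continuity⟩ : C(ℝ, ℝ)).comp f :=
    funext fun f => ContinuousMap.ext fun x => rfl
  rw [he]
  exact ContinuousMap.continuous_postcomp _

end Stmt16Aux

/-- Let `X` be a Tychonoff space, `F ≤ C(X)` a subspace containing
`1`, and `φ : ℝ → ℝ` continuous and not affine, with `φ ∘ f ∈ F` for all `f ∈ F`. Then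
the closure of `F` in the compact-open topology is a subalgebra and a sublattice of
`C(X)`; moreover if `F` separates points then `F` is dense. -/
theorem stmt_16 (X : Type*) [TopologicalSpace X] [T35Space X]
    (F : Submodule ℝ C(X, ℝ)) (hone : (1 : C(X, ℝ)) ∈ F)
    (φ : ℝ → ℝ) (hφ : Continuous φ)
    (hnotaff : ¬∃ a b : ℝ, ∀ t : ℝ, φ t = a * t + b)
    (hcomp : ∀ f ∈ F, ∃ h ∈ F, ∀ x : X, h x = φ (f x)) :
    ((∀ f ∈ closure (F : Set C(X, ℝ)), ∀ g ∈ closure (F : Set C(X, ℝ)),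
        f * g ∈ closure (F : Set C(X, ℝ))) ∧
      (∀ f ∈ closure (F : Set C(X, ℝ)), ∀ g ∈ closure (F : Set C(X, ℝ)),
        f ⊔ g ∈ closure (F : Set C(X, ℝ)))) ∧
      ((∀ x y : X, x ≠ y → ∃ f ∈ F, f x ≠ f y) → Dense (F : Set C(X, ℝ))) := by
  have hone' : (1 : C(X, ℝ)) ∈ closure (F : Set C(X, ℝ)) := subset_closure hone
  set 𝒢 : Submodule ℝ C(X, ℝ) := F.topologicalClosure with h𝒢
  have h𝒢coe : (𝒢 : Set C(X, ℝ)) = closure (F : Set C(X, ℝ)) :=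
    Submodule.topologicalClosure_coe F
  have hmem𝒢 : ∀ {u : C(X, ℝ)}, u ∈ 𝒢 ↔ u ∈ closure (F : Set C(X, ℝ)) := fun {u} => by
    rw [← SetLike.mem_coe, h𝒢coe]
  set φc : C(ℝ, ℝ) := ⟨φ, hφ⟩ with hφcdef
  have hφcomp : ∀ u : C(X, ℝ), u ∈ closure (F : Set C(X, ℝ)) →
      φc.comp u ∈ closure (F : Set C(X, ℝ)) := by
    intro u hu
    have himg : (fun v : C(X, ℝ) => φc.comp v) '' (F : Set C(X, ℝ)) ⊆ (F : Set C(X, ℝ)) := by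
      rintro _ ⟨v, hv, rfl⟩
      obtain ⟨h, hh, hhv⟩ := hcomp v hv
      have he : φc.comp v = h := ContinuousMap.ext fun x => (hhv x).symm
      show φc.comp v ∈ (F : Set C(X, ℝ))
      rw [he]; exact hh
    have h1 : φc.comp u ∈ (fun v : C(X, ℝ) => φc.comp v) '' closure (F : Set C(X, ℝ)) :=
      Set.mem_image_of_mem _ hu
    have h2 := image_closure_subset_closure_image
      (ContinuousMap.continuous_postcomp φc) (s := (F : Set C(X, ℝ))) h1
    exact closure_mono himg h2
  have hcompS : ∀ f : C(X, ℝ), f ∈ closure (F : Set C(X, ℝ)) → ∀ ψ : C(ℝ, ℝ), ψ ∈ Sφ φ →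
      ψ.comp f ∈ closure (F : Set C(X, ℝ)) := by
    intro f hf ψ hψ
    let L : C(ℝ, ℝ) →ₗ[ℝ] C(X, ℝ) :=
      { toFun := fun g => g.comp f
        map_add' := fun g h => by ext x; simp
        map_smul' := fun r g => by ext x; simp }
    have hLc : Continuous L := ContinuousMap.continuous_precomp f
    have hA : ∀ g ∈ Aφ φ, g.comp f ∈ 𝒢 := by
      rintro g (⟨a, b, hab⟩ | ⟨a, b, hab⟩)
      · have he : g.comp f = a • f + b • (1 : C(X, ℝ)) := ContinuousMap.ext fun x => by
          simp [hab]
        rw [he]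
        exact Submodule.add_mem _ (Submodule.smul_mem _ _ (hmem𝒢.mpr hf))
          (Submodule.smul_mem _ _ (hmem𝒢.mpr hone'))
      · have he : g.comp f = φc.comp (a • f + b • (1 : C(X, ℝ))) :=
          ContinuousMap.ext fun x => by simp [hab]; rfl
        rw [he]
        refine hmem𝒢.mpr (hφcomp _ (hmem𝒢.mp ?_))
        exact Submodule.add_mem _ (Submodule.smul_mem _ _ (hmem𝒢.mpr hf))
          (Submodule.smul_mem _ _ (hmem𝒢.mpr hone'))
    have hspan : L '' ((Submodule.span ℝ (Aφ φ)) : Set C(ℝ, ℝ)) ⊆ (𝒢 : Set C(X, ℝ)) := by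
      rw [← Submodule.map_coe]
      refine SetLike.coe_subset_coe.mpr ?_
      rw [Submodule.map_span]
      exact Submodule.span_le.mpr fun x hx => by
        obtain ⟨g, hg, rfl⟩ := hx; exact hA g hg
    have h1 : L ψ ∈ closure (L '' ((Submodule.span ℝ (Aφ φ)) : Set C(ℝ, ℝ))) :=
      image_closure_subset_closure_image hLc ⟨ψ, hψ, rfl⟩
    have h2 := closure_mono hspan h1
    rw [h𝒢coe, closure_closure] at h2
    exact h2
  have hsq : ∀ f ∈ closure (F : Set C(X, ℝ)), f * f ∈ closure (F : Set C(X, ℝ)) := by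
    intro f hf
    have h1 := hcompS f hf sqCM (sq_mem_Sφ φ hφ hnotaff)
    have he : sqCM.comp f = f * f := ContinuousMap.ext fun x => rfl
    rwa [he] at h1
  have hmul : ∀ f ∈ closure (F : Set C(X, ℝ)), ∀ g ∈ closure (F : Set C(X, ℝ)),
      f * g ∈ closure (F : Set C(X, ℝ)) := by
    intro f hf g hg
    have hfg : f + g ∈ 𝒢 := Submodule.add_mem _ (hmem𝒢.mpr hf) (hmem𝒢.mpr hg)
    have h1 := hsq (f + g) (hmem𝒢.mp hfg)
    have h2 := hsq f hf
    have h3 := hsq g hg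
    have he : f * g = (2⁻¹ : ℝ) • ((f + g) * (f + g) - f * f - g * g) :=
      ContinuousMap.ext fun x => by
        simp only [ContinuousMap.smul_apply, ContinuousMap.sub_apply, ContinuousMap.mul_apply,
          ContinuousMap.add_apply, smul_eq_mul]
        ring
    rw [he]
    exact hmem𝒢.mp (Submodule.smul_mem _ _ (Submodule.sub_mem _ (Submodule.sub_mem _
      (hmem𝒢.mpr h1) (hmem𝒢.mpr h2)) (hmem𝒢.mpr h3)))
  have hpow : ∀ f ∈ closure (F : Set C(X, ℝ)), ∀ n : ℕ, f ^ n ∈ closure (F : Set C(X, ℝ)) := by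
    intro f hf n
    induction n with
    | zero => simpa [pow_zero] using hone'
    | succ n ih => rw [pow_succ]; exact hmul _ ih _ hf
  have habs : ∀ f ∈ closure (F : Set C(X, ℝ)), |f| ∈ closure (F : Set C(X, ℝ)) := by
    intro f hf
    have haev : ∀ q : Polynomial ℝ, Polynomial.aeval f q ∈ closure (F : Set C(X, ℝ)) := by
      intro q
      induction q using Polynomial.induction_on' with
      | add p q hp hq =>
        rw [map_add]
        exact hmem𝒢.mp (Submodule.add_mem _ (hmem𝒢.mpr hp) (hmem𝒢.mpr hq))
      | monomial n a =>
        have he : Polynomial.aeval f (Polynomial.monomial n a) = a • f ^ n := by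
          rw [Polynomial.aeval_monomial, Algebra.smul_def]
        rw [he]
        exact hmem𝒢.mp (Submodule.smul_mem _ _ (hmem𝒢.mpr (hpow f hf n)))
    suffices h : |f| ∈ closure (closure (F : Set C(X, ℝ))) by rwa [closure_closure] at h
    rw [stmt16_memclo]
    intro K hK ε hε
    obtain ⟨r, hr⟩ := ((hK.image f.continuous).isBounded).subset_closedBall 0
    set R : ℝ := |r| + 1 with hRdef
    obtain ⟨p, hp⟩ := exists_polynomial_near_of_continuousOn (-R) R (fun t => |t|)
      continuous_abs.continuousOn ε hε
    refine ⟨Polynomial.aeval f p, haev p, ?_⟩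
    intro x hx
    have hfx : f x ∈ Icc (-R) R := by
      have h1 : f x ∈ (⇑f) '' K := Set.mem_image_of_mem _ hx
      have h2 := hr h1
      rw [Metric.mem_closedBall, Real.dist_eq, sub_zero] at h2
      have h3 : |f x| ≤ R := by
        calc |f x| ≤ r := h2
          _ ≤ |r| := le_abs_self r
          _ ≤ R := by rw [hRdef]; linarith
      rw [abs_le] at h3; exact ⟨h3.1, h3.2⟩
    have h4 := hp (f x) hfx
    rw [Real.dist_eq, Polynomial.aeval_continuousMap_apply, ContinuousMap.abs_apply]
    exact h4
  have hsup : ∀ f ∈ closure (F : Set C(X, ℝ)), ∀ g ∈ closure (F : Set C(X, ℝ)),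
      f ⊔ g ∈ closure (F : Set C(X, ℝ)) := by
    intro f hf g hg
    have hsub : f - g ∈ 𝒢 := Submodule.sub_mem _ (hmem𝒢.mpr hf) (hmem𝒢.mpr hg)
    have habsfg := habs (f - g) (hmem𝒢.mp hsub)
    have he : f ⊔ g = (2⁻¹ : ℝ) • (f + g + |f - g|) := ContinuousMap.ext fun x => by
      simp only [ContinuousMap.sup_apply, ContinuousMap.smul_apply, ContinuousMap.add_apply,
        ContinuousMap.abs_apply, ContinuousMap.sub_apply, smul_eq_mul]
      rcases le_total (f x) (g x) with h | h
      · rw [max_eq_right h, abs_of_nonpos (by linarith)]; ring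
      · rw [max_eq_left h, abs_of_nonneg (by linarith)]; ring
    rw [he]
    exact hmem𝒢.mp (Submodule.smul_mem _ _ (Submodule.add_mem _ (Submodule.add_mem _
      (hmem𝒢.mpr hf) (hmem𝒢.mpr hg)) (hmem𝒢.mpr habsfg)))
  refine ⟨⟨hmul, hsup⟩, ?_⟩
  intro hsep f
  rw [stmt16_memclo]
  intro K hK ε hε
  haveI : CompactSpace K := isCompact_iff_compactSpace.mp hK
  set ι : C(K, X) := ⟨Subtype.val, continuous_subtype_val⟩ with hιdef
  set ρ := ContinuousMap.compRightAlgHom ℝ ℝ ι with hρdef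
  set GA : Subalgebra ℝ C(X, ℝ) :=
    { carrier := closure (F : Set C(X, ℝ))
      mul_mem' := fun {a b} ha hb => hmul a ha b hb
      one_mem' := hone'
      add_mem' := fun {a b} ha hb =>
        hmem𝒢.mp (Submodule.add_mem _ (hmem𝒢.mpr ha) (hmem𝒢.mpr hb))
      zero_mem' := hmem𝒢.mp (Submodule.zero_mem _)
      algebraMap_mem' := fun r => by
        have he : algebraMap ℝ C(X, ℝ) r = r • (1 : C(X, ℝ)) := Algebra.algebraMap_eq_smul_one r
        rw [he]
        exact hmem𝒢.mp (Submodule.smul_mem _ _ (hmem𝒢.mpr hone')) } with hGAdef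
  set B : Subalgebra ℝ C(K, ℝ) := GA.map ρ with hBdef
  have hBsep : B.SeparatesPoints := by
    intro x y hxy
    have hval : (x : X) ≠ (y : X) := fun h => hxy (Subtype.ext h)
    obtain ⟨g, hgF, hgxy⟩ := hsep x y hval
    have hmemB : ρ g ∈ B := Subalgebra.mem_map.mpr ⟨g, subset_closure hgF, rfl⟩
    exact ⟨_, ⟨ρ g, hmemB, rfl⟩, by exact hgxy⟩
  have htop := ContinuousMap.subalgebra_topologicalClosure_eq_top_of_separatesPoints B hBsep
  have hρf : ρ f ∈ closure (B : Set C(K, ℝ)) := by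
    have h1 : ρ f ∈ (B.topologicalClosure : Set C(K, ℝ)) := by rw [htop]; trivial
    rwa [Subalgebra.topologicalClosure_coe] at h1
  obtain ⟨b, hbB, hbd⟩ := Metric.mem_closure_iff.mp hρf (ε / 2) (by positivity)
  rw [hBdef, Subalgebra.coe_map] at hbB
  obtain ⟨p, hpG, rfl⟩ := hbB
  have hpF : p ∈ closure (F : Set C(X, ℝ)) := hpG
  obtain ⟨q, hqF, hq⟩ := stmt16_memclo.mp hpF K hK (ε / 2) (by positivity)
  refine ⟨q, hqF, fun x hx => ?_⟩
  have h1 := hq x hx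
  have h2 : dist (p x) (f x) < ε / 2 := by
    have h3 := ContinuousMap.dist_apply_le_dist (f := ρ f) (g := ρ p) ⟨x, hx⟩
    have h4 : (ρ f) ⟨x, hx⟩ = f x := rfl
    have h5 : (ρ p) ⟨x, hx⟩ = p x := rfl
    rw [h4, h5] at h3
    calc dist (p x) (f x) = dist (f x) (p x) := dist_comm _ _
      _ ≤ dist (ρ f) (ρ p) := h3
      _ < ε / 2 := hbd
  calc dist (q x) (f x) ≤ dist (q x) (p x) + dist (p x) (f x) := dist_triangle _ _ _
    _ < ε := by linarith
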